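/- Let X be a CAT(0) cube complex, F a member of a factor system 𝔉 with constant ξ, and x, y ∈ X 0-cubes with d_{ĈF}(π_F(x), π_F(y)) > 2ξ + 4. Then any combinatorial geodesic from x to y enters some parallel copy of F. -/

import Mathlib

/-- A combinatorial model of a CAT(0) cube complex: its `0`--skeleton is a
median graph, encoded by its wallspace (hyperplanes and halfspaces), with
the graph metric on the `1`--skeleton equal to the wall-counting metric. -/
structure CubeComplex where
  /-- vertices (`0`--cubes) -/
  V : Type
  /-- hyperplanes (walls) -/
  Wall : Type
  /-- halfspace membership: `side w x` means `x` is on the positive side of `w` -/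
  side : Wall → V → Prop
  /-- graph metric on the `1`--skeleton -/
  d : V → V → ℕ
  sepFinite : ∀ x y : V, {w : Wall | ¬ (side w x ↔ side w y)}.Finite
  d_eq : ∀ x y : V, d x y = {w : Wall | ¬ (side w x ↔ side w y)}.ncard
  /-- every hyperplane is dual to some `1`--cube -/
  wall_dual : ∀ w : Wall, ∃ x y : V, d x y = 1 ∧ ¬ (side w x ↔ side w y)
  /-- the median operation of the underlying median graph -/
  median : V → V → V → V
  median_xy : ∀ x y z, d x (median x y z) + d (median x y z) y = d x y
  median_yz : ∀ x y z, d y (median x y z) + d (median x y z) z = d y z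
  median_xz : ∀ x y z, d x (median x y z) + d (median x y z) z = d x z

namespace CubeComplex

variable (X : CubeComplex)

/-- the hyperplane `w` separates `x` from `y` -/
def Sep (w : X.Wall) (x y : X.V) : Prop := ¬ (X.side w x ↔ X.side w y)

/-- the hyperplane `w` separates `x` from the set `K` -/
def SepFrom (w : X.Wall) (x : X.V) (K : Set X.V) : Prop := ∀ k ∈ K, X.Sep w x k

/-- `z` lies on a geodesic from `x` to `y` -/
def Btw (x z y : X.V) : Prop := X.d x z + X.d z y = X.d x y

/-- a convex (interval-closed, equivalently geodesically convex) subset -/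
def IsConvex (K : Set X.V) : Prop := ∀ a ∈ K, ∀ b ∈ K, ∀ z, X.Btw a z b → z ∈ K

/-- the hyperplane `w` crosses the set `K` -/
def Crosses (w : X.Wall) (K : Set X.V) : Prop := ∃ a ∈ K, ∃ b ∈ K, X.Sep w a b

/-- two subcomplexes are parallel if exactly the same hyperplanes cross them -/
def ParallelSet (K K' : Set X.V) : Prop := ∀ w : X.Wall, X.Crosses w K ↔ X.Crosses w K'

/-- the vertex set of the carrier `N(w)` of the hyperplane `w` -/
def carrier (w : X.Wall) : Set X.V := {x | ∃ y, X.d x y = 1 ∧ X.Sep w x y}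

end CubeComplex

/-- A convex subcomplex of a CAT(0) cube complex, together with its gate
(closest-point projection) map, characterized by the property that a
hyperplane separates `x` from `gate x` iff it separates `x` from the
subcomplex. -/
structure ConvexSub (X : CubeComplex) where
  carrier : Set X.V
  nonempty : carrier.Nonempty
  convex : X.IsConvex carrier
  gate : X.V → X.V
  gate_mem : ∀ x, gate x ∈ carrier
  gate_idem : ∀ x ∈ carrier, gate x = x
  gate_sep : ∀ x w, X.Sep w x (gate x) ↔ X.SepFrom w x carrier

namespace CubeComplex

variable (X : CubeComplex)

/-- the set `S` has diameter `< n` -/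
def DiamLt (S : Set X.V) (n : ℕ) : Prop := ∀ a ∈ S, ∀ b ∈ S, X.d a b < n

/-- `S` is (the vertex set of) a combinatorial hyperplane: one of the two
copies of a hyperplane `w` bounding its carrier -/
def IsCombHypSet (S : Set X.V) : Prop :=
  ∃ w : X.Wall,
    S = {x | x ∈ X.carrier w ∧ X.side w x} ∨ S = {x | x ∈ X.carrier w ∧ ¬ X.side w x}

/-- the carrier of the hyperplane `w` inside the subcomplex `K` -/
def carrierIn (K : Set X.V) (w : X.Wall) : Set X.V :=
  {x | x ∈ K ∧ ∃ y ∈ K, X.d x y = 1 ∧ X.Sep w x y}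

end CubeComplex

/-- A factor system on a CAT(0) cube complex `X` (Definition 8.1 of
Behrstock–Hagen–Sisto): a uniformly locally finite family of nonempty convex
subcomplexes containing `X` and all subcomplexes parallel to combinatorial
hyperplanes, and closed under gate projections of diameter at least `ξ`. -/
structure FactorSystem (X : CubeComplex) where
  /-- index set of the members of the factor system -/
  Fac : Type
  /-- the members, as convex subcomplexes -/
  F : Fac → ConvexSub X
  /-- multiplicity bound -/
  Δ : ℕ
  one_le_Δ : 1 ≤ Δ
  /-- projection threshold -/
  ξ : ℕ
  one_le_ξ : 1 ≤ ξ
  /-- `X` itself belongs to the factor system -/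
  top : Fac
  top_carrier : (F top).carrier = Set.univ
  /-- uniform local finiteness: each `0`--cube lies in at most `Δ` members -/
  loc_fin : ∀ x : X.V, {i : Fac | x ∈ (F i).carrier}.Finite ∧
    {i : Fac | x ∈ (F i).carrier}.ncard ≤ Δ
  /-- every convex subcomplex parallel to a combinatorial hyperplane belongs
  to the factor system -/
  hyp_mem : ∀ K : ConvexSub X,
    (∃ S : Set X.V, X.IsCombHypSet S ∧ X.ParallelSet K.carrier S) →
    ∃ i : Fac, (F i).carrier = K.carrier
  /-- closure under gate projections: for `F, F'` in the system, either the
  projection `𝔤_F(F')` is in the system or it has diameter `< ξ` -/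
  proj_closed : ∀ i j : Fac,
    (∃ k : Fac, (F k).carrier = (F i).gate '' (F j).carrier) ∨
    X.DiamLt ((F i).gate '' (F j).carrier) ξ

namespace FactorSystem

variable {X : CubeComplex} (FS : FactorSystem X)

/-- `i` indexes a cone point of the factored contact graph of `F j`: a member
of `𝔉_{F j} − {F j}` which is parallel to a combinatorial hyperplane or has
diameter at least `ξ` -/
def ConePt (j i : FS.Fac) : Prop :=
  (FS.F i).carrier ⊆ (FS.F j).carrier ∧ (FS.F i).carrier ≠ (FS.F j).carrier ∧
    ((∃ S : Set X.V, X.IsCombHypSet S ∧ X.ParallelSet (FS.F i).carrier S) ∨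
      ¬ X.DiamLt (FS.F i).carrier FS.ξ)

/-- the contact/cone adjacency relation underlying the factored contact graph
of `F j`.  Vertices: `Sum.inl w` for hyperplanes `w`, `Sum.inr i` for cone
points. -/
def fcgRel (j : FS.Fac) : (X.Wall ⊕ FS.Fac) → (X.Wall ⊕ FS.Fac) → Prop
  | Sum.inl w, Sum.inl w' =>
      X.Crosses w (FS.F j).carrier ∧ X.Crosses w' (FS.F j).carrier ∧
        ∃ x, x ∈ X.carrierIn (FS.F j).carrier w ∧ x ∈ X.carrierIn (FS.F j).carrier w'
  | Sum.inl w, Sum.inr i => FS.ConePt j i ∧ X.Crosses w (FS.F i).carrier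
  | Sum.inr i, Sum.inl w => FS.ConePt j i ∧ X.Crosses w (FS.F i).carrier
  | Sum.inr _, Sum.inr _ => False

/-- the factored contact graph `Ĉ(F j)` of the member `F j` of the factor
system: the contact graph of `F j` with a cone vertex for each member of
`𝔉_{F j} − {F j}` parallel to a combinatorial hyperplane or of diameter
`≥ ξ`, joined to all hyperplanes crossing it. -/
def fcg (j : FS.Fac) : SimpleGraph (X.Wall ⊕ FS.Fac) where
  Adj a b := a ≠ b ∧ FS.fcgRel j a b
  symm := by
    refine ⟨?_⟩
    rintro (w | i) (w' | i') ⟨hne, h⟩ <;>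
      refine ⟨Ne.symm hne, ?_⟩
    · obtain ⟨h1, h2, x, hx1, hx2⟩ := h
      exact ⟨h2, h1, x, hx2, hx1⟩
    · exact h
    · exact h
    · exact h
  loopless := ⟨fun a h => h.1 rfl⟩

/-- the projection `π_{F j}(x)` of a `0`--cube `x` to the factored contact
graph of `F j`: the clique of hyperplanes of `F j` whose carriers contain the
gate of `x` -/
def projFC (j : FS.Fac) (x : X.V) : Set (X.Wall ⊕ FS.Fac) :=
  {v | ∃ w : X.Wall, v = Sum.inl w ∧
    (FS.F j).gate x ∈ X.carrierIn (FS.F j).carrier w}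

/-- the projection of a subset `S ⊆ X` to the factored contact graph of `F j` -/
def projFCSet (j : FS.Fac) (S : Set X.V) : Set (X.Wall ⊕ FS.Fac) :=
  ⋃ z ∈ S, FS.projFC j z

/-- distance between subsets of the factored contact graph of `F j` -/
noncomputable def dFC (j : FS.Fac) (A B : Set (X.Wall ⊕ FS.Fac)) : ℕ :=
  sInf {n | ∃ a ∈ A, ∃ b ∈ B, (FS.fcg j).dist a b = n}

/-- `F i` is parallel into `F j` (parallel to a subcomplex of `F j`) -/
def ParallelInto (i j : FS.Fac) : Prop :=
  ∃ S : Set X.V, S ⊆ (FS.F j).carrier ∧ X.ParallelSet S (FS.F i).carrier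

/-- the parallelism classes of `F i` and `F j` are orthogonal: parallel copies
of `F i` and `F j` span an (`ℓ¹`-) isometrically embedded product `F i × F j` -/
def Orthogonal (i j : FS.Fac) : Prop :=
  ∃ ι : (FS.F i).carrier × (FS.F j).carrier → X.V,
    (∀ p q : (FS.F i).carrier × (FS.F j).carrier,
      X.d (ι p) (ι q) = X.d (p.1 : X.V) (q.1 : X.V) + X.d (p.2 : X.V) (q.2 : X.V)) ∧
    (∀ b : (FS.F j).carrier,
      X.ParallelSet (Set.range fun a => ι (a, b)) (FS.F i).carrier) ∧
    (∀ a : (FS.F i).carrier,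
      X.ParallelSet (Set.range fun b => ι (a, b)) (FS.F j).carrier)

/-- the parallelism classes of `F i` and `F j` are transverse -/
def Transverse (i j : FS.Fac) : Prop :=
  ¬ FS.ParallelInto i j ∧ ¬ FS.ParallelInto j i ∧ ¬ FS.Orthogonal i j

end FactorSystem

/-- a combinatorial geodesic, recorded by its sequence of `0`--cubes -/
def CubeComplex.IsGeodesicSeq (X : CubeComplex) {n : ℕ} (α : Fin (n + 1) → X.V) : Prop :=
  ∀ i j : Fin (n + 1), X.d (α i) (α j) = max (i : ℕ) (j : ℕ) - min (i : ℕ) (j : ℕ)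


/-! ### Infrastructure -/

open Classical

namespace CubeComplex

variable {X : CubeComplex}

/-- the set of walls separating `x` from `y` -/
def W (X : CubeComplex) (x y : X.V) : Set X.Wall := {w | X.Sep w x y}

lemma w_finite (x y : X.V) : (X.W x y).Finite := X.sepFinite x y

lemma d_eq' (x y : X.V) : X.d x y = (X.W x y).ncard := X.d_eq x y

lemma sep_symm {w : X.Wall} {x y : X.V} (h : X.Sep w x y) : X.Sep w y x := by
  unfold Sep at *; tauto

lemma sep_irrefl (w : X.Wall) (x : X.V) : ¬ X.Sep w x x := by
  unfold Sep; tauto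

lemma w_symm (x y : X.V) : X.W x y = X.W y x := by
  ext w; exact ⟨sep_symm, sep_symm⟩

lemma w_tri (x y z : X.V) : X.W x z ⊆ X.W x y ∪ X.W y z := by
  intro w hw; unfold W Sep at *; simp only [Set.mem_setOf_eq, Set.mem_union] at *; tauto

lemma d_self (x : X.V) : X.d x x = 0 := by
  rw [d_eq']
  have : X.W x x = ∅ := by
    ext w; simp [W]; exact fun h => (sep_irrefl w x h).elim
  simp [this]

lemma d_comm (x y : X.V) : X.d x y = X.d y x := by
  rw [d_eq', d_eq', w_symm]

lemma d_eq_zero_iff {x y : X.V} : X.d x y = 0 ↔ X.W x y = ∅ := by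
  rw [d_eq']
  constructor
  · intro h; exact ((Set.ncard_eq_zero (w_finite x y)).mp h)
  · intro h; simp [h]

lemma d_pos_of_sep {w : X.Wall} {x y : X.V} (h : X.Sep w x y) : 1 ≤ X.d x y := by
  rcases Nat.eq_zero_or_pos (X.d x y) with h0 | h1
  · exact absurd (d_eq_zero_iff.mp h0 ▸ h : w ∈ (∅ : Set X.Wall)) (by simp)
  · exact h1

lemma sep_congr_left {x x' y : X.V} (h : X.W x x' = ∅) (w : X.Wall) :
    X.Sep w x y ↔ X.Sep w x' y := by
  have hw : ¬ X.Sep w x x' := by rw [Set.eq_empty_iff_forall_notMem] at h; exact h w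
  unfold Sep at *; tauto

lemma w_congr {x x' y y' : X.V} (hx : X.W x x' = ∅) (hy : X.W y y' = ∅) :
    X.W x y = X.W x' y' := by
  ext w
  have h1 := sep_congr_left (X := X) hx (y := y) w
  have h2 : X.Sep w x' y ↔ X.Sep w x' y' := by
    have hw : ¬ X.Sep w y y' := by rw [Set.eq_empty_iff_forall_notMem] at hy; exact hy w
    unfold Sep at *; tauto
  simp only [W, Set.mem_setOf_eq]
  rw [h1, h2]

lemma d_congr {x x' y y' : X.V} (hx : X.W x x' = ∅) (hy : X.W y y' = ∅) :
    X.d x y = X.d x' y' := by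
  rw [d_eq', d_eq', w_congr hx hy]

/-- betweenness is equivalent to disjointness of the wall-sets -/
lemma btw_iff {x z y : X.V} : X.Btw x z y ↔ X.W x z ∩ X.W z y = ∅ := by
  constructor
  · intro h
    unfold Btw at h
    rw [d_eq', d_eq', d_eq'] at h
    have hsub : X.W x y ⊆ X.W x z ∪ X.W z y := w_tri x z y
    have hle : (X.W x y).ncard ≤ (X.W x z ∪ X.W z y).ncard :=
      Set.ncard_le_ncard hsub ((w_finite x z).union (w_finite z y))
    have hui : (X.W x z ∪ X.W z y).ncard + (X.W x z ∩ X.W z y).ncard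
        = (X.W x z).ncard + (X.W z y).ncard :=
      Set.ncard_union_add_ncard_inter _ _ (w_finite x z) (w_finite z y)
    have : (X.W x z ∩ X.W z y).ncard = 0 := by omega
    exact (Set.ncard_eq_zero (((w_finite x z).inter_of_left _))).mp this
  · intro h
    have h1 : X.W x z ⊆ X.W x y := by
      intro w hw
      have : w ∉ X.W z y := by
        intro hw2; exact absurd (Set.mem_inter hw hw2) (by rw [h]; simp)
      unfold W Sep at *; simp only [Set.mem_setOf_eq] at *; tauto
    have h2 : X.W z y ⊆ X.W x y := by
      intro w hw
      have : w ∉ X.W x z := by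
        intro hw2; exact absurd (Set.mem_inter hw2 hw) (by rw [h]; simp)
      unfold W Sep at *; simp only [Set.mem_setOf_eq] at *; tauto
    have he : X.W x y = X.W x z ∪ X.W z y := by
      apply Set.Subset.antisymm (w_tri x z y)
      exact Set.union_subset h1 h2
    unfold Btw
    rw [d_eq', d_eq', d_eq', he,
      Set.ncard_union_eq (Set.disjoint_iff_inter_eq_empty.mpr h) (w_finite x z) (w_finite z y)]

lemma btw_sub_left {x z y : X.V} (h : X.Btw x z y) : X.W x z ⊆ X.W x y := by
  have hd := btw_iff.mp h
  intro w hw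
  have : w ∉ X.W z y := fun hw2 => absurd (Set.mem_inter hw hw2) (by rw [hd]; simp)
  unfold W Sep at *; simp only [Set.mem_setOf_eq] at *; tauto

lemma btw_sub_right {x z y : X.V} (h : X.Btw x z y) : X.W z y ⊆ X.W x y := by
  have hd := btw_iff.mp h
  intro w hw
  have : w ∉ X.W x z := fun hw2 => absurd (Set.mem_inter hw2 hw) (by rw [hd]; simp)
  unfold W Sep at *; simp only [Set.mem_setOf_eq] at *; tauto

lemma btw_self_left (x y : X.V) : X.Btw x x y := by
  rw [btw_iff]
  ext w; simp [W]; intro h; exact (sep_irrefl w x h).elim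

lemma btw_self_right (x y : X.V) : X.Btw x y y := by
  rw [btw_iff]
  ext w; simp [W]; intro _ h; exact (sep_irrefl w y h)

lemma btw_symm {x z y : X.V} (h : X.Btw x z y) : X.Btw y z x := by
  rw [btw_iff] at *
  rw [w_symm y z, w_symm z x, Set.inter_comm]
  exact h

/-- transitivity of betweenness -/
lemma btw_trans {p a z q : X.V} (h1 : X.Btw p a z) (h2 : X.Btw p z q) : X.Btw p a q := by
  rw [btw_iff] at *
  ext w
  simp only [Set.mem_inter_iff, Set.mem_empty_iff_false, iff_false, not_and]
  intro hpa haq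
  have h1' := Set.eq_empty_iff_forall_notMem.mp h1 w
  have h2' := Set.eq_empty_iff_forall_notMem.mp h2 w
  have hpz : w ∈ X.W p z := btw_sub_left (btw_iff.mpr h1) hpa
  have : w ∉ X.W z q := fun hc => h2' (Set.mem_inter hpz hc)
  unfold W Sep at *; simp only [Set.mem_setOf_eq] at *; tauto

lemma btw_trans' {p a z q : X.V} (h1 : X.Btw p a z) (h2 : X.Btw p z q) : X.Btw a z q := by
  rw [btw_iff] at *
  ext w
  simp only [Set.mem_inter_iff, Set.mem_empty_iff_false, iff_false, not_and]
  intro haz hzq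
  have h2' := Set.eq_empty_iff_forall_notMem.mp h2 w
  have h1' := Set.eq_empty_iff_forall_notMem.mp h1 w
  have hpz : w ∈ X.W p z ∨ w ∈ X.W p a := by
    have := w_tri (X := X) p a z
    unfold W Sep at *; simp only [Set.mem_setOf_eq] at *; tauto
  rcases hpz with h | h
  · exact h2' (Set.mem_inter h hzq)
  · exact h1' (Set.mem_inter h haz)

lemma median_btw_xy (x y z : X.V) : X.Btw x (X.median x y z) y := X.median_xy x y z
lemma median_btw_yz (x y z : X.V) : X.Btw y (X.median x y z) z := X.median_yz x y z
lemma median_btw_xz (x y z : X.V) : X.Btw x (X.median x y z) z := X.median_xz x y z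

lemma sep_from_not_crosses {w : X.Wall} {z : X.V} {K : Set X.V} (h : X.SepFrom w z K) :
    ¬ X.Crosses w K := by
  rintro ⟨a, ha, b, hb, hab⟩
  have h1 := h a ha
  have h2 := h b hb
  unfold Sep at *; tauto

lemma crosses_of_mem_sep {w : X.Wall} {a b : X.V} {K : Set X.V} (ha : a ∈ K) (hb : b ∈ K)
    (h : X.Sep w a b) : X.Crosses w K := ⟨a, ha, b, hb, h⟩

end CubeComplex

lemma prop_flip {p q b : Prop} (h1 : ¬(p ↔ q)) (h2 : ¬(p ↔ b)) : q ↔ b := by tauto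
lemma prop_flip2 {p q b : Prop} (h1 : ¬(p ↔ q)) (h2 : p ↔ b) : ¬(q ↔ b) := by tauto
lemma prop_nn {p q b : Prop} (h1 : ¬(p ↔ b)) (h2 : ¬(q ↔ b)) : p ↔ q := by tauto
lemma prop_nb {p b : Prop} (h : p ↔ b) : ¬(p ↔ ¬b) := by tauto
lemma prop_negb {p b : Prop} (h : ¬(p ↔ b)) : p ↔ ¬b := by tauto
lemma prop_negb' {p b : Prop} (h : ¬(p ↔ ¬b)) : p ↔ b := by tauto

namespace CubeComplex

variable {X : CubeComplex}

lemma not_sep_symm {w : X.Wall} {a b : X.V} (h : ¬ X.Sep w a b) : ¬ X.Sep w b a :=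
  fun hc => h (sep_symm hc)

lemma sep_trans_of_not {w : X.Wall} {a b c : X.V} (h1 : ¬ X.Sep w a b) (h2 : X.Sep w b c) :
    X.Sep w a c := by
  unfold Sep at h1 h2 ⊢; tauto

lemma not_sep_trans {w : X.Wall} {a b c : X.V} (h1 : ¬ X.Sep w a b) (h2 : ¬ X.Sep w b c) :
    ¬ X.Sep w a c := by
  unfold Sep at h1 h2 ⊢; tauto

lemma sep_to_side {w : X.Wall} {a b : X.V} (h : X.Sep w a b) :
    ¬ (X.side w a ↔ X.side w b) := h

lemma side_to_sep {w : X.Wall} {a b : X.V} (h : ¬ (X.side w a ↔ X.side w b)) :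
    X.Sep w a b := h

end CubeComplex

namespace CubeComplex
variable {X : CubeComplex}
lemma sep_of_sep_not {w : X.Wall} {a b c : X.V} (h1 : X.Sep w a b) (h2 : ¬ X.Sep w b c) :
    X.Sep w a c := sep_symm (sep_trans_of_not (not_sep_symm h2) (sep_symm h1))
end CubeComplex

namespace CubeComplex

variable {X : CubeComplex}

lemma convex_inter {K L : Set X.V} (hK : X.IsConvex K) (hL : X.IsConvex L) :
    X.IsConvex (K ∩ L) := by
  intro a ha b hb z hz
  exact ⟨hK a ha.1 b hb.1 z hz, hL a ha.2 b hb.2 z hz⟩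

/-- the interval between two points -/
def itv (X : CubeComplex) (p q : X.V) : Set X.V := {z | X.Btw p z q}

lemma convex_itv (p q : X.V) : X.IsConvex (X.itv p q) := by
  intro a ha b hb z hz
  show X.Btw p z q
  rw [btw_iff]
  ext w
  simp only [Set.mem_inter_iff, Set.mem_empty_iff_false, iff_false, not_and]
  intro hpz hzq
  have hda := Set.eq_empty_iff_forall_notMem.mp (btw_iff.mp ha) w
  have hdb := Set.eq_empty_iff_forall_notMem.mp (btw_iff.mp hb) w
  have hdz := Set.eq_empty_iff_forall_notMem.mp (btw_iff.mp hz) w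
  simp only [Set.mem_inter_iff, Set.mem_setOf_eq, not_and, W, Sep] at hda hdb hdz hpz hzq
  by_cases haz : X.side w a ↔ X.side w z
  · exact hda (fun h => hpz (h.trans haz)) (fun h => hzq (haz.symm.trans h))
  · have hzb : X.side w z ↔ X.side w b := not_not.mp (hdz haz)
    exact hdb (fun h => hpz (h.trans hzb.symm)) (fun h => hzq (hzb.trans h))

lemma convex_halfspace (w : X.Wall) (p : X.V) : X.IsConvex {z | ¬ X.Sep w z p} := by
  intro a ha b hb z hz
  simp only [Set.mem_setOf_eq] at *
  intro hs
  have h1 : w ∈ X.W a z := by unfold W Sep at *; simp only [Set.mem_setOf_eq] at *; tauto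
  have h2 : w ∈ X.W z b := by unfold W Sep at *; simp only [Set.mem_setOf_eq] at *; tauto
  have := Set.eq_empty_iff_forall_notMem.mp (btw_iff.mp hz) w
  exact this (Set.mem_inter h1 h2)

lemma convex_halfspace' (w : X.Wall) (p : X.V) : X.IsConvex {z | X.Sep w z p} := by
  intro a ha b hb z hz
  simp only [Set.mem_setOf_eq] at *
  by_contra hs
  have h1 : w ∈ X.W a z := by unfold W Sep at *; simp only [Set.mem_setOf_eq] at *; tauto
  have h2 : w ∈ X.W z b := by unfold W Sep at *; simp only [Set.mem_setOf_eq] at *; tauto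
  have := Set.eq_empty_iff_forall_notMem.mp (btw_iff.mp hz) w
  exact this (Set.mem_inter h1 h2)

end CubeComplex

namespace ConvexSub

open CubeComplex

variable {X : CubeComplex}

/-- construct the gate (closest-point projection) onto a nonempty convex subset -/
noncomputable def mk' (K : Set X.V) (hne : K.Nonempty) (hconv : X.IsConvex K) :
    ConvexSub X := by
  classical
  have hmin : ∀ z : X.V, ∃ p ∈ K, ∀ q ∈ K, X.d z p ≤ X.d z q := by
    intro z
    have hset : {m | ∃ p ∈ K, X.d z p = m}.Nonempty :=
      ⟨X.d z hne.choose, hne.choose, hne.choose_spec, rfl⟩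
    obtain ⟨p, hp, hpm⟩ := Nat.sInf_mem hset
    exact ⟨p, hp, fun q hq => hpm ▸ Nat.sInf_le ⟨q, hq, rfl⟩⟩
  refine
    { carrier := K
      nonempty := hne
      convex := hconv
      gate := fun z => if hz : z ∈ K then z else (hmin z).choose
      gate_mem := ?_
      gate_idem := ?_
      gate_sep := ?_ }
  · intro z
    by_cases hz : z ∈ K
    · simp [hz]
    · simp only [hz, dif_neg, not_false_iff]
      exact (hmin z).choose_spec.1
  · intro z hz; simp [hz]
  · intro z w
    by_cases hz : z ∈ K
    · simp only [hz, dif_pos]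
      constructor
      · intro h; exact absurd h (sep_irrefl w z)
      · intro h; exact absurd (h z hz) (sep_irrefl w z)
    · simp only [hz, dif_neg, not_false_iff]
      obtain ⟨hp, hmin'⟩ := (hmin z).choose_spec
      set p := (hmin z).choose with hpdef
      constructor
      · intro hsep k hk
        by_contra hnk
        set m := X.median z p k with hm
        have hmK : m ∈ K := hconv p hp k hk m (median_btw_yz z p k)
        have h1 : X.Btw z m p := median_btw_xy z p k
        have h2 : X.Btw z m k := median_btw_xz z p k
        have hle : X.d z m ≤ X.d z p := by
          have := h1; unfold CubeComplex.Btw at this; omega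
        have hge : X.d z p ≤ X.d z m := hmin' m hmK
        have hmp : X.d m p = 0 := by
          have := h1; unfold CubeComplex.Btw at this; omega
        -- so side w m = side w p; w separates z from m; hence w ∈ W z k
        have hmp' : X.W m p = ∅ := d_eq_zero_iff.mp hmp
        have hnmp : ¬ X.Sep w m p := by
          have := Set.eq_empty_iff_forall_notMem.mp hmp' w; exact this
        have hzm : X.Sep w z m := by unfold CubeComplex.Sep at *; tauto
        have hzk : w ∈ X.W z k := btw_sub_left h2 hzm
        exact hnk hzk
      · intro h; exact h p hp

@[simp] lemma mk'_carrier (K : Set X.V) (hne : K.Nonempty) (hconv : X.IsConvex K) :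
    (mk' K hne hconv).carrier = K := rfl

variable (G : ConvexSub X)

/-- the wall-set between two gates -/
lemma sep_gate_iff (a b : X.V) (w : X.Wall) :
    X.Sep w (G.gate a) (G.gate b) ↔ (X.Sep w a b ∧ X.Crosses w G.carrier) := by
  constructor
  · intro h
    have hna : ¬ X.SepFrom w a G.carrier := by
      intro hs
      have h1 := hs (G.gate a) (G.gate_mem a)
      have h2 := hs (G.gate b) (G.gate_mem b)
      unfold CubeComplex.Sep at *; tauto
    have hnb : ¬ X.SepFrom w b G.carrier := by
      intro hs
      have h1 := hs (G.gate a) (G.gate_mem a)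
      have h2 := hs (G.gate b) (G.gate_mem b)
      unfold CubeComplex.Sep at *; tauto
    have ha : ¬ X.Sep w a (G.gate a) := fun hc => hna ((G.gate_sep a w).mp hc)
    have hb : ¬ X.Sep w b (G.gate b) := fun hc => hnb ((G.gate_sep b w).mp hc)
    constructor
    · unfold CubeComplex.Sep at *; tauto
    · exact crosses_of_mem_sep (G.gate_mem a) (G.gate_mem b) h
  · rintro ⟨hab, hcr⟩
    have ha : ¬ X.Sep w a (G.gate a) := by
      intro hc
      exact sep_from_not_crosses ((G.gate_sep a w).mp hc) hcr
    have hb : ¬ X.Sep w b (G.gate b) := by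
      intro hc
      exact sep_from_not_crosses ((G.gate_sep b w).mp hc) hcr
    unfold CubeComplex.Sep at *; tauto

/-- the gate lies between the point and any point of the subcomplex -/
lemma btw_gate (a : X.V) (k : X.V) (hk : k ∈ G.carrier) : X.Btw a (G.gate a) k := by
  rw [CubeComplex.btw_iff]
  ext w
  simp only [Set.mem_inter_iff, Set.mem_empty_iff_false, iff_false, not_and]
  intro h1 h2
  have h1' : X.Sep w a (G.gate a) := h1
  have h2' : X.Sep w (G.gate a) k := h2
  have hs : X.SepFrom w a G.carrier := (G.gate_sep a w).mp h1'
  have h3 := hs k hk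
  unfold CubeComplex.Sep at h1' h2' h3
  tauto

/-- convexity implies closure under wall-equivalence -/
lemma mem_of_wnull {a b : X.V} (ha : a ∈ G.carrier) (h : X.W a b = ∅) : b ∈ G.carrier := by
  apply G.convex a ha a ha b
  rw [CubeComplex.btw_iff, h, Set.empty_inter]

end ConvexSub

namespace CubeComplex

variable {X : CubeComplex}

lemma w_singleton {a b : X.V} {u : X.Wall} (hd : X.d a b = 1) (hs : X.Sep u a b) :
    X.W a b = {u} := by
  rw [d_eq'] at hd
  obtain ⟨v, hv⟩ := Set.ncard_eq_one.mp hd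
  have : u ∈ X.W a b := hs
  rw [hv] at this ⊢
  simp only [Set.mem_singleton_iff] at this
  rw [this]

lemma d_one_of_w_singleton {a b : X.V} {u : X.Wall} (h : X.W a b = {u}) : X.d a b = 1 := by
  rw [d_eq', h]; simp

end CubeComplex

namespace ConvexSub

open CubeComplex

variable {X : CubeComplex}

private lemma neighbor_aux (G : ConvexSub X) {p q z : X.V} {u : X.Wall} {a b : X.V}
    (G' : ConvexSub X) (hG'c : G'.carrier = G.carrier ∩ X.itv p z)
    (hp : p ∈ G.carrier) (hzG : z ∈ G.carrier) (hbtw : X.Btw p z q)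
    (hu : X.Sep u p z)
    (hmin : ∀ z' ∈ G.carrier, X.Btw p z' q → 1 ≤ X.d p z' → X.d p z ≤ X.d p z')
    (hd1 : X.d a b = 1) (hsep : X.Sep u a b) (hside : X.side u a ↔ X.side u p) :
    ∃ z' v, z' ∈ G.carrier ∧ X.Btw p z' q ∧ X.W p z' = {v} := by
  classical
  have hpK' : p ∈ G'.carrier := by rw [hG'c]; exact ⟨hp, btw_self_left p z⟩
  have hzK' : z ∈ G'.carrier := by rw [hG'c]; exact ⟨hzG, btw_self_right p z⟩
  set ma := G'.gate a with hma
  set mb := G'.gate b with hmb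
  have hWab : X.W a b = {u} := w_singleton hd1 hsep
  have hcr : X.Crosses u G'.carrier := ⟨p, hpK', z, hzK', hu⟩
  have hmamb : X.W ma mb = {u} := by
    apply Set.Subset.antisymm
    · intro w hw
      have h2 := (sep_gate_iff G' a b w).mp hw
      have h3 : w ∈ X.W a b := h2.1
      rw [hWab] at h3; exact h3
    · intro w hw
      simp only [Set.mem_singleton_iff] at hw
      subst hw
      exact (sep_gate_iff G' a b w).mpr ⟨hsep, hcr⟩
  have hmaK : ma ∈ G'.carrier := G'.gate_mem a
  have hmbK : mb ∈ G'.carrier := G'.gate_mem b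
  rw [hG'c] at hmaK hmbK
  have humz : X.Sep u ma z := by
    have hmam : X.Sep u ma mb := by
      have h4 : u ∈ X.W ma mb := by rw [hmamb]; simp
      exact h4
    -- u separates p from z; ma is a gate of a; we know side u ma ≠ side u mb,
    -- and exactly one of ma, mb is on each side of u; moreover ¬ Sep u a ma.
    have hnsama : ¬ X.Sep u a ma := fun hc =>
      sep_from_not_crosses ((G'.gate_sep a u).mp hc) hcr
    unfold CubeComplex.Sep at hmam hnsama hu ⊢; tauto
  have hdmaz : 1 ≤ X.d ma z := d_pos_of_sep humz
  have hbtw_pmaz : X.Btw p ma z := hmaK.2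
  have hdpma : X.d p ma = 0 := by
    by_contra hne
    have h1 : 1 ≤ X.d p ma := Nat.one_le_iff_ne_zero.mpr hne
    have h2 : X.Btw p ma q := btw_trans hbtw_pmaz hbtw
    have h3 := hmin ma hmaK.1 h2 h1
    unfold CubeComplex.Btw at hbtw_pmaz
    omega
  have hWpma : X.W p ma = ∅ := d_eq_zero_iff.mp hdpma
  have hWpmb : X.W p mb = {u} := by
    apply Set.Subset.antisymm
    · intro w hw
      have h5 : w ∈ X.W p ma ∪ X.W ma mb := w_tri (X := X) p ma mb hw
      rw [hWpma, hmamb] at h5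
      simpa using h5
    · intro w hw
      simp only [Set.mem_singleton_iff] at hw
      subst hw
      have h1 : ¬ X.Sep w p ma :=
        Set.eq_empty_iff_forall_notMem.mp hWpma w
      have h2 : X.Sep w ma mb := by
        have h6 : w ∈ X.W ma mb := by rw [hmamb]; simp
        exact h6
      show X.Sep w p mb
      unfold CubeComplex.Sep at h1 h2 ⊢; tauto
  exact ⟨mb, u, hmbK.1, btw_trans hmbK.2 hbtw, hWpmb⟩

/-- the neighbor lemma: inside a convex set one can make a first step
from `p` towards `q`, crossing a single wall -/
lemma neighbor (G : ConvexSub X) {p q : X.V} (hp : p ∈ G.carrier) (hq : q ∈ G.carrier)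
    (h : 1 ≤ X.d p q) : ∃ z u, z ∈ G.carrier ∧ X.Btw p z q ∧ X.W p z = {u} := by
  classical
  set D : Set ℕ := {m | 1 ≤ m ∧ ∃ z ∈ G.carrier, X.Btw p z q ∧ X.d p z = m} with hD
  have hDne : D.Nonempty := ⟨X.d p q, h, q, hq, btw_self_right p q, rfl⟩
  obtain ⟨h1, z, hzG, hbtw, hdz⟩ := Nat.sInf_mem hDne
  have hmin : ∀ z' ∈ G.carrier, X.Btw p z' q → 1 ≤ X.d p z' → X.d p z ≤ X.d p z' := by
    intro z' hz' hb' hd'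
    rw [hdz]
    exact Nat.sInf_le ⟨hd', z', hz', hb', rfl⟩
  have hWne : (X.W p z).Nonempty := by
    apply Set.nonempty_of_ncard_ne_zero
    rw [← d_eq', hdz]; omega
  obtain ⟨u, hu⟩ := hWne
  have hu' : X.Sep u p z := hu
  obtain ⟨a₀, b₀, hd1, hsep⟩ := X.wall_dual u
  have hconv : X.IsConvex (G.carrier ∩ X.itv p z) :=
    convex_inter G.convex (convex_itv p z)
  have hne' : (G.carrier ∩ X.itv p z).Nonempty := ⟨p, hp, btw_self_left p z⟩
  by_cases hside : X.side u a₀ ↔ X.side u p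
  · exact neighbor_aux G (mk' _ hne' hconv) (mk'_carrier _ hne' hconv)
      hp hzG hbtw hu' hmin hd1 hsep hside
  · have hside' : X.side u b₀ ↔ X.side u p := by
      have hsep' := hsep
      unfold CubeComplex.Sep at hsep'; tauto
    exact neighbor_aux G (mk' _ hne' hconv) (mk'_carrier _ hne' hconv)
      hp hzG hbtw hu' hmin (by rw [d_comm] at hd1; exact hd1) (sep_symm hsep) hside'

end ConvexSub

namespace CubeComplex

variable {X : CubeComplex}

/-- the halfspace of the wall `v` indicated by the proposition `b` -/
def halfb (X : CubeComplex) (v : X.Wall) (b : Prop) : Set X.V := {x | X.side v x ↔ b}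

/-- a combinatorial hyperplane: one side of the carrier of `v` -/
def hset (X : CubeComplex) (v : X.Wall) (b : Prop) : Set X.V :=
  {x | x ∈ X.carrier v ∧ (X.side v x ↔ b)}

lemma halfb_compl (v : X.Wall) (b : Prop) :
    {x | ¬ (X.side v x ↔ b)} = X.halfb v (¬ b) := by
  ext x; simp only [halfb, Set.mem_setOf_eq]; tauto

lemma hset_congr (v : X.Wall) {b b' : Prop} (h : b ↔ b') :
    X.hset v b = X.hset v b' := by
  ext x; simp only [hset, Set.mem_setOf_eq]; tauto

lemma halfb_nonempty (v : X.Wall) (b : Prop) : (X.halfb v b).Nonempty := by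
  obtain ⟨a, c, hd, hs⟩ := X.wall_dual v
  by_cases h : X.side v a ↔ b
  · exact ⟨a, h⟩
  · refine ⟨c, ?_⟩
    simp only [halfb, Set.mem_setOf_eq]
    tauto

lemma halfb_convex (v : X.Wall) (b : Prop) : X.IsConvex (X.halfb v b) := by
  intro a ha c hc z hz
  simp only [halfb, Set.mem_setOf_eq] at *
  by_contra hs
  have h1 : v ∈ X.W a z := show ¬ (X.side v a ↔ X.side v z) by tauto
  have h2 : v ∈ X.W z c := show ¬ (X.side v z ↔ X.side v c) by tauto
  exact Set.eq_empty_iff_forall_notMem.mp (btw_iff.mp hz) v (Set.mem_inter h1 h2)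

lemma mem_carrier_of_edge {v : X.Wall} {a c : X.V} (hd : X.d a c = 1) (hs : X.Sep v a c) :
    a ∈ X.carrier v := ⟨c, hd, hs⟩

/-- the gate into a halfspace lies on the combinatorial hyperplane, and it has
a partner across the wall -/
lemma not_sep_of_sep_sep {w : X.Wall} {a b c : X.V} (h1 : X.Sep w a b) (h2 : X.Sep w a c) :
    ¬ X.Sep w b c := by
  unfold Sep at h1 h2 ⊢; tauto

lemma partner_aux (v : X.Wall) (b : Prop) (r : X.V) (hr : ¬ (X.side v r ↔ b))
    (Gb Gnb : ConvexSub X) (hGbc : Gb.carrier = X.halfb v b)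
    (hGnbc : Gnb.carrier = {x | ¬ (X.side v x ↔ b)}) :
    ∃ p p', (∀ w, X.Sep w r p ↔ X.SepFrom w r (X.halfb v b)) ∧ X.W p p' = {v} ∧
      p ∈ X.hset v b ∧ ¬ (X.side v p' ↔ b) ∧ p' ∈ X.carrier v ∧
      (∀ w, w ≠ v → ¬ X.Sep w p p') ∧ p = Gb.gate r := by
  classical
  set p := Gb.gate r with hp
  set p' := Gnb.gate p with hp'
  have hpmem : X.side v p ↔ b := by
    have := Gb.gate_mem r; rw [hGbc] at this; exact this
  have hp'mem : ¬ (X.side v p' ↔ b) := by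
    have := Gnb.gate_mem p; rw [hGnbc] at this; exact this
  have hWpp' : X.W p p' = {v} := by
    apply Set.Subset.antisymm
    · intro w hw
      simp only [Set.mem_singleton_iff]
      by_contra hne
      have hsf : X.SepFrom w p {x | ¬ (X.side v x ↔ b)} := by
        have := (Gnb.gate_sep p w).mp hw; rw [hGnbc] at this; exact this
      have hrp : X.Sep w p r := hsf r hr
      have hsf2 : X.SepFrom w r (X.halfb v b) := by
        have := (Gb.gate_sep r w).mp (sep_symm hrp); rw [hGbc] at this; exact this
      obtain ⟨c, c', hd, hcc⟩ := X.wall_dual w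
      have hWcc : X.W c c' = {w} := w_singleton hd hcc
      have hvnot : ¬ X.Sep v c c' := by
        intro hv
        have hmem : v ∈ X.W c c' := hv
        rw [hWcc] at hmem
        simp only [Set.mem_singleton_iff] at hmem
        exact hne hmem.symm
      have hcc' : X.Sep w c c' := hcc
      rcases Classical.em (X.side v c ↔ b) with hc | hc <;>
        rcases Classical.em (X.side v c' ↔ b) with hc' | hc'
      · exact not_sep_of_sep_sep (hsf2 c hc) (hsf2 c' hc') hcc'
      · exact hvnot (show X.Sep v c c' by unfold Sep; tauto)
      · exact hvnot (show X.Sep v c c' by unfold Sep; tauto)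
      · exact not_sep_of_sep_sep (hsf c hc) (hsf c' hc') hcc'
    · intro w hw
      simp only [Set.mem_singleton_iff] at hw
      subst hw
      show X.Sep w p p'
      unfold Sep; tauto
  refine ⟨p, p', ?_, hWpp', ⟨⟨p', d_one_of_w_singleton hWpp', ?_⟩, hpmem⟩, hp'mem,
    ⟨p, by rw [d_comm]; exact d_one_of_w_singleton hWpp', ?_⟩, ?_, rfl⟩
  · intro w
    rw [← hGbc]
    exact Gb.gate_sep r w
  · have hm : v ∈ X.W p p' := by rw [hWpp']; simp
    exact hm
  · have hm : v ∈ X.W p p' := by rw [hWpp']; simp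
    exact sep_symm hm
  · intro w hwv hsep
    have hm : w ∈ X.W p p' := hsep
    rw [hWpp'] at hm
    simp only [Set.mem_singleton_iff] at hm
    exact hwv hm

lemma partner (v : X.Wall) (b : Prop) (r : X.V) (hr : ¬ (X.side v r ↔ b)) :
    ∃ p p', (∀ w, X.Sep w r p ↔ X.SepFrom w r (X.halfb v b)) ∧ X.W p p' = {v} ∧
      p ∈ X.hset v b ∧ ¬ (X.side v p' ↔ b) ∧ p' ∈ X.carrier v ∧
      (∀ w, w ≠ v → ¬ X.Sep w p p') := by
  classical
  have hKnb : X.IsConvex {x | ¬ (X.side v x ↔ b)} := by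
    rw [halfb_compl]; exact halfb_convex v (¬ b)
  obtain ⟨p, p', h1, h2, h3, h4, h5, h6, _⟩ :=
    partner_aux v b r hr
      (ConvexSub.mk' _ (halfb_nonempty v b) (halfb_convex v b))
      (ConvexSub.mk' _ ⟨r, hr⟩ hKnb) rfl rfl
  exact ⟨p, p', h1, h2, h3, h4, h5, h6⟩

/-- a wall crossing one side of a carrier crosses the other side as well -/
lemma crosses_hset_flip {c v : X.Wall} {b : Prop} (hcv : c ≠ v)
    (h : X.Crosses c (X.hset v b)) (b' : Prop) : X.Crosses c (X.hset v b') := by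
  classical
  by_cases hbb : b ↔ b'
  · rw [hset_congr v hbb] at h; exact h
  · obtain ⟨s₁, hs₁, s₂, hs₂, hsep⟩ := h
    obtain ⟨⟨y₁, hdy₁, hsy₁⟩, hside₁⟩ := hs₁
    obtain ⟨⟨y₂, hdy₂, hsy₂⟩, hside₂⟩ := hs₂
    have hW₁ : X.W s₁ y₁ = {v} := w_singleton hdy₁ hsy₁
    have hW₂ : X.W s₂ y₂ = {v} := w_singleton hdy₂ hsy₂
    have hnc₁ : ¬ X.Sep c s₁ y₁ := by
      intro hc
      have : c ∈ X.W s₁ y₁ := hc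
      rw [hW₁] at this; simp only [Set.mem_singleton_iff] at this; exact hcv this
    have hnc₂ : ¬ X.Sep c s₂ y₂ := by
      intro hc
      have : c ∈ X.W s₂ y₂ := hc
      rw [hW₂] at this; simp only [Set.mem_singleton_iff] at this; exact hcv this
    refine ⟨y₁, ⟨⟨s₁, by rw [d_comm]; exact hdy₁, sep_symm hsy₁⟩, ?_⟩,
      y₂, ⟨⟨s₂, by rw [d_comm]; exact hdy₂, sep_symm hsy₂⟩, ?_⟩, ?_⟩
    · unfold Sep at hsy₁; tauto
    · unfold Sep at hsy₂; tauto
    · unfold Sep at hsep hnc₁ hnc₂ ⊢; tauto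

end CubeComplex

namespace CubeComplex

variable {X : CubeComplex}

lemma hset_nonempty (v : X.Wall) (b : Prop) : (X.hset v b).Nonempty := by
  obtain ⟨a, c, hd, hs⟩ := X.wall_dual v
  by_cases h : X.side v a ↔ b
  · exact ⟨a, ⟨c, hd, hs⟩, h⟩
  · exact ⟨c, ⟨a, by rw [d_comm]; exact hd, sep_symm hs⟩, prop_flip hs h⟩

lemma hset_convex (v : X.Wall) (b : Prop) : X.IsConvex (X.hset v b) := by
  rintro a ⟨⟨a', hda, hsa⟩, hba⟩ c ⟨⟨c', hdc, hsc⟩, hbc⟩ z hz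
  have hzb : X.side v z ↔ b :=
    halfb_convex v b a hba c hbc z hz
  refine ⟨?_, hzb⟩
  have hWa : X.W a a' = {v} := w_singleton hda hsa
  have hWc : X.W c c' = {v} := w_singleton hdc hsc
  set z' := X.median a' c' z with hz'
  have hb1 : X.Btw a' z' c' := median_btw_xy a' c' z
  have hb2 : X.Btw c' z' z := median_btw_yz a' c' z
  have hb3 : X.Btw a' z' z := median_btw_xz a' c' z
  have hWzz' : X.W z z' ⊆ {v} := by
    intro w hw
    have hw1 : w ∈ X.W a' z := btw_sub_right hb3 (by rw [w_symm]; exact hw)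
    have hw2 : w ∈ X.W c' z := btw_sub_right hb2 (by rw [w_symm]; exact hw)
    simp only [Set.mem_singleton_iff]
    by_contra hne
    have hna : ¬ X.Sep w a a' := by
      intro hs
      have : w ∈ X.W a a' := hs
      rw [hWa] at this; simp only [Set.mem_singleton_iff] at this; exact hne this
    have hnc : ¬ X.Sep w c c' := by
      intro hs
      have : w ∈ X.W c c' := hs
      rw [hWc] at this; simp only [Set.mem_singleton_iff] at this; exact hne this
    have hwaz : w ∈ X.W a z := sep_trans_of_not hna hw1
    have hwzc : w ∈ X.W z c := sep_symm (sep_trans_of_not hnc hw2)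
    exact Set.eq_empty_iff_forall_notMem.mp (btw_iff.mp hz) w (Set.mem_inter hwaz hwzc)
  have hsz' : X.Sep v z z' := by
    have ha' : ¬ (X.side v a' ↔ b) := prop_flip2 (sep_to_side hsa) hba
    have hc' : ¬ (X.side v c' ↔ b) := prop_flip2 (sep_to_side hsc) hbc
    have hnv : ¬ X.Sep v a' c' := fun hs => hs (prop_nn ha' hc')
    have hsub : X.W a' z' ⊆ X.W a' c' := btw_sub_left hb1
    have hnv2 : ¬ X.Sep v a' z' := fun hs => hnv (hsub hs)
    have h5 : X.side v a' ↔ X.side v z' := not_not.mp hnv2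
    exact side_to_sep (fun hc => ha' ((h5.trans hc.symm).trans hzb))
  have hWeq : X.W z z' = {v} := Set.Subset.antisymm hWzz' (by
    intro w hw; simp only [Set.mem_singleton_iff] at hw; subst hw; exact hsz')
  exact ⟨z', d_one_of_w_singleton hWeq, hsz'⟩

lemma hset_is_comb (v : X.Wall) (b : Prop) : X.IsCombHypSet (X.hset v b) := by
  refine ⟨v, ?_⟩
  by_cases hb : b
  · left
    ext x
    simp only [hset, Set.mem_setOf_eq]
    tauto
  · right
    ext x
    simp only [hset, Set.mem_setOf_eq]
    tauto

/-- no wall crossing a convex subcomplex `F` lying entirely in the halfspace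
`side v · ↔ b` separates a point `z` of the other halfspace from the
combinatorial hyperplane `hset v b` -/
lemma sepfrom_hset_not_crosses {F : Set X.V} {v : X.Wall} {b : Prop} {z : X.V} {w : X.Wall}
    (hFside : ∀ k ∈ F, (X.side v k ↔ b)) (hz : ¬ (X.side v z ↔ b))
    (hw : X.SepFrom w z (X.hset v b)) : ¬ X.Crosses w F := by
  classical
  rintro ⟨k₁, hk₁, k₂, hk₂, hsep⟩
  by_cases hwv : w = v
  · subst hwv
    exact hsep ((hFside k₁ hk₁).trans (hFside k₂ hk₂).symm)
  -- pick the point of F on the same w-side as z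
  have hpick : ∃ k ∈ F, ¬ X.Sep w k z := by
    by_cases h1 : X.Sep w k₁ z
    · exact ⟨k₂, hk₂, not_sep_of_sep_sep hsep h1⟩
    · exact ⟨k₁, hk₁, h1⟩
  obtain ⟨k, hkF, hkz⟩ := hpick
  have hkb : X.side v k ↔ b := hFside k hkF
  have hknotb : ¬ (X.side v k ↔ ¬ b) := prop_nb hkb
  obtain ⟨p, p', hchar, hWpp', hpmem, hp'side, hp'car, hother⟩ := partner v (¬ b) k hknotb
  -- z lies in the halfspace `¬ b`
  have hzmem : z ∈ X.halfb v (¬ b) := prop_negb hz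
  -- w does not separate k from p
  have hnkp : ¬ X.Sep w k p := fun hs => hkz ((hchar w).mp hs z hzmem)
  have hnkp' : ¬ X.Sep w k p' := fun hs =>
    hnkp (sep_symm (sep_trans_of_not (hother w hwv) (sep_symm hs)))
  -- but p' belongs to `hset v b`, so w separates z from p'
  have hp'h : p' ∈ X.hset v b := ⟨hp'car, prop_negb' hp'side⟩
  exact not_sep_trans (not_sep_symm hkz) hnkp' (hw p' hp'h)

end CubeComplex

namespace CubeComplex

variable {X : CubeComplex}

lemma d_triangle (x y z : X.V) : X.d x z ≤ X.d x y + X.d y z := by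
  rw [d_eq', d_eq', d_eq']
  calc (X.W x z).ncard ≤ (X.W x y ∪ X.W y z).ncard :=
        Set.ncard_le_ncard (w_tri x y z) ((w_finite x y).union (w_finite y z))
    _ ≤ (X.W x y).ncard + (X.W y z).ncard := Set.ncard_union_le _ _

end CubeComplex

namespace ConvexSub

open CubeComplex

variable {X : CubeComplex} (G : ConvexSub X)

lemma carrierIn_congr {p q : X.V} (h : X.W p q = ∅) {w : X.Wall}
    (hp : p ∈ X.carrierIn G.carrier w) : q ∈ X.carrierIn G.carrier w := by
  obtain ⟨hpK, y, hyK, hdy, hsy⟩ := hp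
  refine ⟨mem_of_wnull G hpK h, y, hyK, ?_, ?_⟩
  · rw [← hdy]
    exact (d_congr (by rw [w_symm] at h; exact h) (by
      rw [d_eq_zero_iff.symm, d_self]) : X.d q y = X.d p y)
  · exact sep_trans_of_not (not_sep_symm (Set.eq_empty_iff_forall_notMem.mp h _)) hsy

lemma crosses_of_carrierIn {p : X.V} {w : X.Wall} (hp : p ∈ X.carrierIn G.carrier w) :
    X.Crosses w G.carrier := by
  obtain ⟨hpK, y, hyK, hdy, hsy⟩ := hp
  exact ⟨p, hpK, y, hyK, hsy⟩

/-- a point of a convex subcomplex at positive distance from some point of it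
lies in the carrier of some wall (relative to the subcomplex) -/
lemma carrierIn_exists {r : X.V} (hr : r ∈ G.carrier)
    (hc : ∃ c, X.Crosses c G.carrier) : ∃ u, r ∈ X.carrierIn G.carrier u := by
  obtain ⟨c, k₁, hk₁, k₂, hk₂, hsep⟩ := hc
  have hd12 : 1 ≤ X.d k₁ k₂ := d_pos_of_sep hsep
  have htri := d_triangle (X := X) k₁ r k₂
  have hpick : ∃ k ∈ G.carrier, 1 ≤ X.d r k := by
    rcases Nat.eq_zero_or_pos (X.d r k₂) with h0 | h1
    · refine ⟨k₁, hk₁, ?_⟩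
      rw [d_comm]
      omega
    · exact ⟨k₂, hk₂, h1⟩
  obtain ⟨k, hkG, hdk⟩ := hpick
  obtain ⟨z, u, hzG, hbtw, hWz⟩ := neighbor G hr hkG hdk
  exact ⟨u, hr, z, hzG, d_one_of_w_singleton hWz, by
    have : u ∈ X.W r z := by rw [hWz]; simp
    exact this⟩

end ConvexSub

namespace FactorSystem

open CubeComplex ConvexSub

variable {X : CubeComplex} {FS : FactorSystem X} {i : FS.Fac}

lemma adj_wall_wall {w w' : X.Wall} {p : X.V} (hne : w ≠ w')
    (hp : p ∈ X.carrierIn (FS.F i).carrier w) (hp' : p ∈ X.carrierIn (FS.F i).carrier w') :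
    (FS.fcg i).Adj (Sum.inl w) (Sum.inl w') := by
  change (Sum.inl w : X.Wall ⊕ FS.Fac) ≠ Sum.inl w' ∧ FS.fcgRel i (Sum.inl w) (Sum.inl w')
  refine ⟨by simp [hne], ?_⟩
  exact ⟨crosses_of_carrierIn _ hp, crosses_of_carrierIn _ hp', p, hp, hp'⟩

lemma adj_wall_cone {w : X.Wall} {k : FS.Fac} (hcone : FS.ConePt i k)
    (hcr : X.Crosses w (FS.F k).carrier) :
    (FS.fcg i).Adj (Sum.inl w) (Sum.inr k) :=
  (⟨by simp, hcone, hcr⟩ : (Sum.inl w : X.Wall ⊕ FS.Fac) ≠ Sum.inr k ∧ FS.fcgRel i (Sum.inl w) (Sum.inr k))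

/-- walks in the factored contact graph along geodesics in `F i` -/
lemma walk_of_carrierIn :
    ∀ (m : ℕ) (p q : X.V) (w w' : X.Wall), p ∈ X.carrierIn (FS.F i).carrier w →
      q ∈ X.carrierIn (FS.F i).carrier w' → X.d p q ≤ m →
      ∃ P : (FS.fcg i).Walk (Sum.inl w) (Sum.inl w'), P.length ≤ m + 1 := by
  intro m
  induction m with
  | zero =>
    intro p q w w' hp hq hd
    have h0 : X.W p q = ∅ := d_eq_zero_iff.mp (Nat.le_zero.mp hd)
    have hq' : p ∈ X.carrierIn (FS.F i).carrier w' :=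
      carrierIn_congr (FS.F i) (by rw [w_symm] at h0; exact h0) hq
    by_cases hww : w = w'
    · subst hww
      exact ⟨SimpleGraph.Walk.nil, by simp⟩
    · exact ⟨SimpleGraph.Walk.cons (adj_wall_wall hww hp hq') SimpleGraph.Walk.nil, by simp⟩
  | succ m ih =>
    intro p q w w' hp hq hd
    rcases Nat.lt_or_ge (X.d p q) (m + 1) with hlt | hge
    · obtain ⟨P, hP⟩ := ih p q w w' hp hq (by omega)
      exact ⟨P, by omega⟩
    · have hd1 : 1 ≤ X.d p q := by omega
      obtain ⟨z, u, hzG, hbtw, hWz⟩ := neighbor (FS.F i) hp.1 hq.1 hd1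
      have hdpz : X.d p z = 1 := d_one_of_w_singleton hWz
      have hdq : X.d z q ≤ m := by
        have := hbtw
        unfold CubeComplex.Btw at this
        omega
      have hsep : X.Sep u p z := by
        have : u ∈ X.W p z := by rw [hWz]; simp
        exact this
      have hpu : p ∈ X.carrierIn (FS.F i).carrier u := ⟨hp.1, z, hzG, hdpz, hsep⟩
      have hzu : z ∈ X.carrierIn (FS.F i).carrier u :=
        ⟨hzG, p, hp.1, by rw [d_comm]; exact hdpz, sep_symm hsep⟩
      obtain ⟨P, hP⟩ := ih z q u w' hzu hq hdq
      by_cases hwu : w = u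
      · subst hwu
        exact ⟨P, by omega⟩
      · exact ⟨SimpleGraph.Walk.cons (adj_wall_wall hwu hp hpu) P, by simp; omega⟩

end FactorSystem

namespace ConvexSub

open CubeComplex

variable {X : CubeComplex}

lemma sat_subset (G : ConvexSub X) (S : Set X.V) :
    {u | ∃ a ∈ G.gate '' S, X.W u a = ∅} ⊆ G.carrier := by
  rintro u ⟨a, ⟨h, hh, rfl⟩, hW⟩
  exact mem_of_wnull G (G.gate_mem h) (by rw [w_symm] at hW; exact hW)

lemma sat_convex (G H : ConvexSub X) :
    X.IsConvex {u | ∃ a ∈ G.gate '' H.carrier, X.W u a = ∅} := by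
  rintro a ⟨a', ⟨h₁, hh₁, rfl⟩, hWa⟩ b ⟨b', ⟨h₂, hh₂, rfl⟩, hWb⟩ z hz
  set c := X.median h₁ h₂ z with hc
  have hcH : c ∈ H.carrier := H.convex h₁ hh₁ h₂ hh₂ c (median_btw_xy h₁ h₂ z)
  refine ⟨G.gate c, ⟨c, hcH, rfl⟩, ?_⟩
  rw [Set.eq_empty_iff_forall_notMem]
  intro w hw
  have hw' : X.Sep w z (G.gate c) := hw
  have haG : a ∈ G.carrier := mem_of_wnull G (G.gate_mem h₁) (by rw [w_symm] at hWa; exact hWa)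
  have hbG : b ∈ G.carrier := mem_of_wnull G (G.gate_mem h₂) (by rw [w_symm] at hWb; exact hWb)
  have hzG : z ∈ G.carrier := G.convex a haG b hbG z hz
  have hcr : X.Crosses w G.carrier := ⟨z, hzG, G.gate c, G.gate_mem c, hw'⟩
  have hnc : ¬ X.Sep w c (G.gate c) := fun hs =>
    sep_from_not_crosses ((G.gate_sep c w).mp hs) hcr
  have hzc : X.Sep w z c := sep_symm (sep_trans_of_not hnc (sep_symm hw'))
  -- transfer along h₁
  have hch₁ : X.W c z ⊆ X.W h₁ z := btw_sub_right (median_btw_xz h₁ h₂ z)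
  have hzh₁ : X.Sep w h₁ z := hch₁ (sep_symm hzc)
  have hnh₁ : ¬ X.Sep w h₁ (G.gate h₁) := fun hs =>
    sep_from_not_crosses ((G.gate_sep h₁ w).mp hs) hcr
  have h1 : X.Sep w z (G.gate h₁) := sep_symm (sep_trans_of_not (not_sep_symm hnh₁) hzh₁)
  have hna : ¬ X.Sep w a (G.gate h₁) := Set.eq_empty_iff_forall_notMem.mp hWa w
  have hza : X.Sep w a z := sep_trans_of_not hna (sep_symm h1)
  -- transfer along h₂
  have hch₂ : X.W c z ⊆ X.W h₂ z := btw_sub_right (median_btw_yz h₁ h₂ z)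
  have hzh₂ : X.Sep w h₂ z := hch₂ (sep_symm hzc)
  have hnh₂ : ¬ X.Sep w h₂ (G.gate h₂) := fun hs =>
    sep_from_not_crosses ((G.gate_sep h₂ w).mp hs) hcr
  have h2 : X.Sep w z (G.gate h₂) := sep_symm (sep_trans_of_not (not_sep_symm hnh₂) hzh₂)
  have hnb : ¬ X.Sep w b (G.gate h₂) := Set.eq_empty_iff_forall_notMem.mp hWb w
  have hzb : X.Sep w z b := sep_symm (sep_trans_of_not hnb (sep_symm h2))
  exact Set.eq_empty_iff_forall_notMem.mp (btw_iff.mp hz) w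
    (Set.mem_inter hza hzb)

end ConvexSub

namespace FactorSystem

open CubeComplex ConvexSub

variable {X : CubeComplex} {FS : FactorSystem X} {i : FS.Fac}

/-- the key one-leg lemma: if `v` separates both `z` and `z'` from `F i`, and
the combinatorial hyperplane of `v` on the `F i` side is *not* crossed by every
wall crossing `F i`, then the projections of `z` and `z'` to the factored
contact graph are at distance at most `max ξ 2`. -/
lemma oneleg (v : X.Wall) (b : Prop) {z z' : X.V}
    (hFb : ∀ k ∈ (FS.F i).carrier, (X.side v k ↔ b))
    (hzb : ¬ (X.side v z ↔ b)) (hz'b : ¬ (X.side v z' ↔ b))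
    (hnE : ¬ ∀ c, X.Crosses c (FS.F i).carrier → X.Crosses c (X.hset v b)) :
    ∃ w₁ w₂, (FS.F i).gate z ∈ X.carrierIn (FS.F i).carrier w₁ ∧
      (FS.F i).gate z' ∈ X.carrierIn (FS.F i).carrier w₂ ∧
      ∃ P : (FS.fcg i).Walk (Sum.inl w₁) (Sum.inl w₂), P.length ≤ max FS.ξ 2 := by
  classical
  have hC : ∃ c, X.Crosses c (FS.F i).carrier := by
    push_neg at hnE
    obtain ⟨c, hc, -⟩ := hnE
    exact ⟨c, hc⟩
  -- the combinatorial hyperplane as a member of the factor system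
  obtain ⟨j, hj⟩ := FS.hyp_mem
    (ConvexSub.mk' (X.hset v b) (hset_nonempty v b) (hset_convex v b))
    ⟨X.hset v b, hset_is_comb v b, fun w => Iff.rfl⟩
  rw [ConvexSub.mk'_carrier] at hj
  -- the gates of z, z' into F i factor through the hyperplane member, up to walls
  have hql : ∀ (t : X.V), ¬ (X.side v t ↔ b) →
      X.W ((FS.F i).gate t) ((FS.F i).gate ((FS.F j).gate t)) = ∅ := by
    intro t ht
    rw [Set.eq_empty_iff_forall_notMem]
    intro w hw
    have hw' : X.Sep w ((FS.F i).gate t) ((FS.F i).gate ((FS.F j).gate t)) := hw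
    obtain ⟨hsep, hcr⟩ := (sep_gate_iff (FS.F i) t ((FS.F j).gate t) w).mp hw'
    have hsf : X.SepFrom w t (FS.F j).carrier := ((FS.F j).gate_sep t w).mp hsep
    rw [hj] at hsf
    exact sepfrom_hset_not_crosses hFb ht hsf hcr
  set r₁ := (FS.F i).gate z with hr₁def
  set r₂ := (FS.F i).gate z' with hr₂def
  set p₁ := (FS.F i).gate ((FS.F j).gate z) with hp₁def
  set p₂ := (FS.F i).gate ((FS.F j).gate z') with hp₂def
  have hW₁ : X.W r₁ p₁ = ∅ := hql z hzb
  have hW₂ : X.W r₂ p₂ = ∅ := hql z' hz'b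
  set A : Set X.V := (FS.F i).gate '' (FS.F j).carrier with hAdef
  have hp₁A : p₁ ∈ A := ⟨(FS.F j).gate z, (FS.F j).gate_mem z, rfl⟩
  have hp₂A : p₂ ∈ A := ⟨(FS.F j).gate z', (FS.F j).gate_mem z', rfl⟩
  have hd12 : X.d r₁ r₂ = X.d p₁ p₂ := d_congr hW₁ hW₂
  have hr₁F : r₁ ∈ (FS.F i).carrier := (FS.F i).gate_mem z
  have hr₂F : r₂ ∈ (FS.F i).carrier := (FS.F i).gate_mem z'
  -- the small-diameter case
  have hDcase : X.DiamLt A FS.ξ → ∃ w₁ w₂,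
      r₁ ∈ X.carrierIn (FS.F i).carrier w₁ ∧
      r₂ ∈ X.carrierIn (FS.F i).carrier w₂ ∧
      ∃ P : (FS.fcg i).Walk (Sum.inl w₁) (Sum.inl w₂), P.length ≤ max FS.ξ 2 := by
    intro hdiam
    have hdlt : X.d p₁ p₂ < FS.ξ := hdiam p₁ hp₁A p₂ hp₂A
    obtain ⟨u, hu⟩ := carrierIn_exists (FS.F i) hr₁F hC
    obtain ⟨u', hu'⟩ := carrierIn_exists (FS.F i) hr₂F hC
    obtain ⟨P, hP⟩ := walk_of_carrierIn (FS.ξ - 1) r₁ r₂ u u' hu hu' (by omega)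
    refine ⟨u, u', hu, hu', P, ?_⟩
    have := FS.one_le_ξ
    have h2 : FS.ξ ≤ max FS.ξ 2 := le_max_left _ _
    omega
  rcases FS.proj_closed i j with ⟨k, hk⟩ | hdiam
  · -- the projection is a member
    by_cases heq : (FS.F k).carrier = (FS.F i).carrier
    · -- then every wall crossing F i crosses the hyperplane: contradiction
      exfalso
      apply hnE
      intro c hc
      rw [← heq, hk] at hc
      obtain ⟨a₁, ha₁, a₂, ha₂, hsep⟩ := hc
      obtain ⟨h₁, hh₁, rfl⟩ := ha₁
      obtain ⟨h₂, hh₂, rfl⟩ := ha₂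
      obtain ⟨hsep', -⟩ := (sep_gate_iff (FS.F i) h₁ h₂ c).mp hsep
      rw [hj] at hh₁ hh₂
      exact ⟨h₁, hh₁, h₂, hh₂, hsep'⟩
    · by_cases hdk : X.DiamLt (FS.F k).carrier FS.ξ
      · exact hDcase (by rw [hk] at hdk; exact hdk)
      · -- the cone-point case
        have hcone : FS.ConePt i k := by
          refine ⟨?_, heq, Or.inr hdk⟩
          rw [hk]
          rintro u ⟨h, hh, rfl⟩
          exact (FS.F i).gate_mem h
        by_cases hd0 : X.d r₁ r₂ = 0
        · obtain ⟨u, hu⟩ := carrierIn_exists (FS.F i) hr₁F hC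
          have hu' := carrierIn_congr (FS.F i) (d_eq_zero_iff.mp hd0) hu
          exact ⟨u, u, hu, hu', SimpleGraph.Walk.nil, by simp⟩
        · have hd1 : 1 ≤ X.d r₁ r₂ := by omega
          set sat : Set X.V := {u | ∃ a ∈ A, X.W u a = ∅} with hsatdef
          have hsatconv : X.IsConvex sat := sat_convex (FS.F i) (FS.F j)
          have hr₁sat : r₁ ∈ sat := ⟨p₁, hp₁A, hW₁⟩
          have hr₂sat : r₂ ∈ sat := ⟨p₂, hp₂A, hW₂⟩
          set SatSub := ConvexSub.mk' sat ⟨r₁, hr₁sat⟩ hsatconv with hSS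
          have hSSc : SatSub.carrier = sat := ConvexSub.mk'_carrier _ _ _
          have hsub : sat ⊆ (FS.F i).carrier := sat_subset (FS.F i) (FS.F j).carrier
          obtain ⟨z₁, u₁, hz₁, hbtw₁, hWru₁⟩ :=
            neighbor SatSub (by rw [hSSc]; exact hr₁sat) (by rw [hSSc]; exact hr₂sat) hd1
          obtain ⟨z₂, u₂, hz₂, hbtw₂, hWru₂⟩ :=
            neighbor SatSub (by rw [hSSc]; exact hr₂sat) (by rw [hSSc]; exact hr₁sat)
              (by rw [d_comm]; exact hd1)
          rw [hSSc] at hz₁ hz₂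
          have hsep₁ : X.Sep u₁ r₁ z₁ := by
            have hm : u₁ ∈ X.W r₁ z₁ := by rw [hWru₁]; simp
            exact hm
          have hsep₂ : X.Sep u₂ r₂ z₂ := by
            have hm : u₂ ∈ X.W r₂ z₂ := by rw [hWru₂]; simp
            exact hm
          have hu₁r : r₁ ∈ X.carrierIn (FS.F i).carrier u₁ :=
            ⟨hr₁F, z₁, hsub hz₁, d_one_of_w_singleton hWru₁, hsep₁⟩
          have hu₂r : r₂ ∈ X.carrierIn (FS.F i).carrier u₂ :=
            ⟨hr₂F, z₂, hsub hz₂, d_one_of_w_singleton hWru₂, hsep₂⟩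
          -- the walls u₁, u₂ cross A
          have hcrA : ∀ (r zz : X.V) (u : X.Wall) (pp : X.V), pp ∈ A → X.W r pp = ∅ →
              zz ∈ sat → X.Sep u r zz → X.Crosses u (FS.F k).carrier := by
            intro r zz u pp hppA hWr hzzsat hsep
            obtain ⟨aa, haaA, hWzz⟩ := hzzsat
            have h1 : X.Sep u pp zz :=
              sep_trans_of_not
                (not_sep_symm (Set.eq_empty_iff_forall_notMem.mp hWr u)) hsep
            have h2 : X.Sep u pp aa :=
              sep_symm (sep_trans_of_not
                (not_sep_symm (Set.eq_empty_iff_forall_notMem.mp hWzz u)) (sep_symm h1))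
            rw [hk]
            exact ⟨pp, hppA, aa, haaA, h2⟩
          have hu₁cross := hcrA r₁ z₁ u₁ p₁ hp₁A hW₁ hz₁ hsep₁
          have hu₂cross := hcrA r₂ z₂ u₂ p₂ hp₂A hW₂ hz₂ hsep₂
          refine ⟨u₁, u₂, hu₁r, hu₂r,
            SimpleGraph.Walk.cons (adj_wall_cone hcone hu₁cross)
              (SimpleGraph.Walk.cons ((adj_wall_cone hcone hu₂cross).symm)
                SimpleGraph.Walk.nil), ?_⟩
          simp only [SimpleGraph.Walk.length_cons, SimpleGraph.Walk.length_nil]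
          have := le_max_right FS.ξ 2
          omega
  · exact hDcase hdiam

end FactorSystem

open CubeComplex ConvexSub FactorSystem in
/-- Let `F` be a member of a factor system `𝔉` (with
constant `ξ`) on `X`, and let `x, y` be `0`--cubes whose projections to the
factored contact graph `ĈF` are at distance `> 2ξ + 4`.  Then every
combinatorial geodesic from `x` to `y` enters a parallel copy of `F`. -/
theorem geodesic_enters_parallel_copy (X : CubeComplex) (FS : FactorSystem X)
    (i : FS.Fac) (x y : X.V)
    (hfar : 2 * FS.ξ + 4 < FS.dFC i (FS.projFC i x) (FS.projFC i y))
    {n : ℕ} (α : Fin (n + 1) → X.V) (hα : X.IsGeodesicSeq α)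
    (hx : α 0 = x) (hy : α (Fin.last n) = y) :
    ∃ S : Set X.V, X.IsConvex S ∧ X.ParallelSet S (FS.F i).carrier ∧
      ∃ t : Fin (n + 1), α t ∈ S := by
  classical
  set Fc := (FS.F i).carrier with hFc
  set g := (FS.F i).gate with hg
  -- geodesic betweenness
  have hbtwF : ∀ s t u : Fin (n + 1), (s : ℕ) ≤ t → (t : ℕ) ≤ u →
      X.Btw (α s) (α t) (α u) := by
    intro s t u h1 h2
    unfold CubeComplex.Btw
    rw [hα s t, hα t u, hα s u]
    omega
  -- extract the far hypothesis
  have hSne : {m | ∃ a ∈ FS.projFC i x, ∃ b ∈ FS.projFC i y,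
      (FS.fcg i).dist a b = m}.Nonempty := by
    by_contra hemp
    rw [Set.not_nonempty_iff_eq_empty] at hemp
    have : FS.dFC i (FS.projFC i x) (FS.projFC i y) = 0 := by
      unfold FactorSystem.dFC
      rw [hemp, Nat.sInf_empty]
    omega
  obtain ⟨m₀, a₀, ha₀, b₀, hb₀, -⟩ := hSne
  obtain ⟨w₀, -, hw₀⟩ := ha₀
  have hC : ∃ c, X.Crosses c Fc := ⟨w₀, crosses_of_carrierIn (FS.F i) hw₀⟩
  have hcontra : ∀ (w₁ w₂ : X.Wall), g x ∈ X.carrierIn Fc w₁ →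
      g y ∈ X.carrierIn Fc w₂ →
      (∃ P : (FS.fcg i).Walk (Sum.inl w₁) (Sum.inl w₂), P.length ≤ 2 * FS.ξ + 4) →
      False := by
    rintro w₁ w₂ h₁ h₂ ⟨P, hP⟩
    have hmem : (FS.fcg i).dist (Sum.inl w₁) (Sum.inl w₂) ∈
        {m | ∃ a ∈ FS.projFC i x, ∃ b ∈ FS.projFC i y, (FS.fcg i).dist a b = m} :=
      ⟨Sum.inl w₁, ⟨w₁, rfl, h₁⟩, Sum.inl w₂, ⟨w₂, rfl, h₂⟩, rfl⟩
    have h3 := Nat.sInf_le hmem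
    have h4 := SimpleGraph.dist_le P
    unfold FactorSystem.dFC at hfar
    omega
  obtain ⟨k₀, hk₀⟩ := (FS.F i).nonempty
  -- side of F along a non-crossing wall
  have hallside : ∀ v : X.Wall, ¬ X.Crosses v Fc →
      ∀ k ∈ Fc, (X.side v k ↔ X.side v k₀) := by
    intro v hv k hk
    by_contra hs
    exact hv ⟨k, hk, k₀, hk₀, hs⟩
  set E : X.Wall → Prop :=
    fun v => ∀ c, X.Crosses c Fc → X.Crosses c (X.hset v (X.side v k₀)) with hE
  -- one-leg contradiction
  have hξ1 := FS.one_le_ξ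
  have honeC : ∀ v : X.Wall, X.SepFrom v x Fc → X.SepFrom v y Fc → ¬ E v → False := by
    intro v hvx hvy hnE
    obtain ⟨w₁, w₂, h₁, h₂, P, hP⟩ := oneleg v (X.side v k₀)
      (hallside v (sep_from_not_crosses hvx)) (hvx k₀ hk₀) (hvy k₀ hk₀) hnE
    have h5 : max FS.ξ 2 ≤ FS.ξ + 1 := max_le (by omega : FS.ξ ≤ FS.ξ + 1) (by omega : 2 ≤ FS.ξ + 1)
    have h6 : P.length ≤ 2 * FS.ξ + 4 := by omega
    exact hcontra w₁ w₂ h₁ h₂ ⟨P, h6⟩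
  -- two-leg contradiction
  have htwo : ∀ (v w : X.Wall) (t : Fin (n + 1)), X.SepFrom v x Fc → X.SepFrom w y Fc →
      X.SepFrom v (α t) Fc → X.SepFrom w (α t) Fc → ¬ E v → ¬ E w → False := by
    intro v w t hvx hwy hvt hwt hnEv hnEw
    obtain ⟨w₁, w₂, h₁, h₂, P₁, hP₁⟩ := oneleg v (X.side v k₀)
      (hallside v (sep_from_not_crosses hvx)) (hvx k₀ hk₀) (hvt k₀ hk₀) hnEv
    obtain ⟨w₃, w₄, h₃, h₄, P₂, hP₂⟩ := oneleg w (X.side w k₀)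
      (hallside w (sep_from_not_crosses hwy)) (hwt k₀ hk₀) (hwy k₀ hk₀) hnEw
    have hmid : ∃ Pm : (FS.fcg i).Walk (Sum.inl w₂) (Sum.inl w₃), Pm.length ≤ 1 := by
      by_cases hww : w₂ = w₃
      · subst hww; exact ⟨SimpleGraph.Walk.nil, by simp⟩
      · exact ⟨SimpleGraph.Walk.cons (adj_wall_wall hww h₂ h₃) SimpleGraph.Walk.nil,
          by simp⟩
    obtain ⟨Pm, hPm⟩ := hmid
    have h5 : max FS.ξ 2 ≤ FS.ξ + 1 := max_le (by omega : FS.ξ ≤ FS.ξ + 1) (by omega : 2 ≤ FS.ξ + 1)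
    refine hcontra w₁ w₄ h₁ h₄ ⟨P₁.append (Pm.append P₂), ?_⟩
    rw [SimpleGraph.Walk.length_append, SimpleGraph.Walk.length_append]
    have e1 : P₁.length ≤ FS.ξ + 1 := le_trans hP₁ h5
    have e2 : P₂.length ≤ FS.ξ + 1 := le_trans hP₂ h5
    omega
  -- the first moment all `badY` walls have been crossed
  set badY : X.Wall → Prop :=
    fun v => X.Sep v x y ∧ X.SepFrom v x Fc ∧ ¬ E v with hbadY
  set T : Set ℕ := {t | t ≤ n ∧ ∀ v, badY v → X.Sep v x (α ⟨min t n, by omega⟩)} with hT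
  have hnT : n ∈ T := by
    refine ⟨le_refl n, fun v hv => ?_⟩
    have he : (⟨min n n, by omega⟩ : Fin (n + 1)) = Fin.last n := by
      apply Fin.ext; simp [Fin.last]
    rw [he, hy]; exact hv.1
  have hTne : T.Nonempty := ⟨n, hnT⟩
  set t₀ := sInf T with ht₀
  obtain ⟨ht₀n, ht₀cr⟩ := Nat.sInf_mem hTne
  set tF : Fin (n + 1) := ⟨t₀, by omega⟩ with htF
  set p := α tF with hp
  have ht₀cr' : ∀ v, badY v → X.Sep v x p := by
    intro v hv
    have he : (⟨min t₀ n, by omega⟩ : Fin (n + 1)) = tF := by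
      apply Fin.ext; simp [htF]; omega
    have := ht₀cr v hv
    rw [he] at this
    exact this
  -- every wall separating p from F satisfies E
  have hKEY : ∀ w : X.Wall, X.SepFrom w p Fc → E w := by
    intro w hw
    by_contra hnE
    have hnc : ¬ X.Crosses w Fc := sep_from_not_crosses hw
    have hbtwXPY : X.Btw x p y := by
      have := hbtwF 0 tF (Fin.last n) (by simp) (by simp [htF, Fin.last]; omega)
      rw [hx, hy] at this; exact this
    by_cases hxy : X.Sep w x y
    · by_cases hvy : X.SepFrom w y Fc
      · -- w separates y (and p) from F: use minimality of t₀
        have hpy : ¬ X.Sep w p y :=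
          not_sep_of_sep_sep (sep_symm (hw k₀ hk₀)) (sep_symm (hvy k₀ hk₀))
        have hxp : X.Sep w x p := sep_of_sep_not hxy (not_sep_symm hpy)
        have ht1 : 1 ≤ t₀ := by
          by_contra h0
          have ht00 : t₀ = 0 := by omega
          have hpx : p = x := by
            rw [hp, ← hx]
            congr 1
            apply Fin.ext
            simp [htF, ht00]
          rw [hpx] at hxp
          exact sep_irrefl w x hxp
        have htm : (t₀ - 1) ∉ T := Nat.notMem_of_lt_sInf (by omega)
        have hex : ∃ v, badY v ∧ ¬ X.Sep v x (α ⟨t₀ - 1, by omega⟩) := by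
          by_contra hall
          push_neg at hall
          refine htm ⟨by omega, fun v hv => ?_⟩
          have he : (⟨min (t₀ - 1) n, by omega⟩ : Fin (n + 1)) =
              (⟨t₀ - 1, by omega⟩ : Fin (n + 1)) := by
            apply Fin.ext; simp; omega
          rw [he]
          exact hall v hv
        obtain ⟨v, hbv, hnv⟩ := hex
        set q := α ⟨t₀ - 1, by omega⟩ with hq
        have hvw : v ≠ w := by
          intro he
          subst he
          exact not_sep_of_sep_sep (sep_symm (hbv.2.1 k₀ hk₀)) (sep_symm (hvy k₀ hk₀))
            hbv.1
        have hdqp : X.d q p = 1 := by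
          rw [hq, hp, hα]
          simp [htF]
          omega
        obtain ⟨u, huW⟩ := Set.ncard_eq_one.mp (by rw [← d_eq']; exact hdqp)
        by_cases hvp : X.Sep v x p
        · -- both v and w are crossed in the step from q to p, impossible unless v = w
          have hwxq : X.Sep w x q := by
            by_contra hwq
            have hvqp : X.Sep v q p := sep_trans_of_not (not_sep_symm hnv) hvp
            have hwqp : X.Sep w q p := sep_trans_of_not (not_sep_symm hwq) hxp
            have e1 : v ∈ X.W q p := hvqp
            have e2 : w ∈ X.W q p := hwqp
            rw [huW] at e1 e2
            simp only [Set.mem_singleton_iff] at e1 e2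
            exact hvw (e1.trans e2.symm)
          -- at time t₀ - 1, both v and w separate from F
          have hbtwq : X.Btw x q y := by
            have := hbtwF 0 ⟨t₀ - 1, by omega⟩ (Fin.last n) (by simp) (by simp; omega)
            rw [hx, hy] at this; exact this
          have hnqy : ¬ X.Sep w q y := by
            intro hs
            exact Set.eq_empty_iff_forall_notMem.mp (btw_iff.mp hbtwq) w
              (Set.mem_inter hwxq hs)
          have hvq : X.SepFrom v q Fc := fun k hk =>
            sep_trans_of_not (not_sep_symm hnv) (hbv.2.1 k hk)
          have hwq : X.SepFrom w q Fc := fun k hk =>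
            sep_trans_of_not hnqy (hvy k hk)
          exact htwo v w ⟨t₀ - 1, by omega⟩ hbv.2.1 hvy hvq hwq hbv.2.2 hnE
        · -- v is not yet crossed at time t₀
          have hvp' : X.SepFrom v p Fc := fun k hk =>
            sep_trans_of_not (not_sep_symm hvp) (hbv.2.1 k hk)
          exact htwo v w tF hbv.2.1 hvy hvp' hw hbv.2.2 hnE
      · -- w separates x from F, i.e. w is a `badY` wall: contradiction with t₀ ∈ T
        have hvx : X.SepFrom w x Fc := by
          intro k hk
          by_contra hs
          apply hvy
          intro k' hk'
          have h6 : X.Sep w y k := sep_symm (sep_trans_of_not (not_sep_symm hs) hxy)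
          have h7 : ¬ X.Sep w k k' := fun hc => hnc ⟨k, hk, k', hk', hc⟩
          exact sep_of_sep_not h6 h7
        have hb : badY w := ⟨hxy, hvx, hnE⟩
        have hcr := ht₀cr' w hb
        exact not_sep_of_sep_sep (sep_symm (hvx k₀ hk₀)) (sep_symm (hw k₀ hk₀)) hcr
    · -- w does not separate x from y, hence it separates both from F
      have hxp : ¬ X.Sep w x p := fun hs => hxy (btw_sub_left hbtwXPY hs)
      have hpy : ¬ X.Sep w p y := fun hs => hxy (btw_sub_right hbtwXPY hs)
      exact honeC w (fun k hk => sep_trans_of_not hxp (hw k hk))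
        (fun k hk => sep_trans_of_not (not_sep_symm hpy) (hw k hk)) hnE
  -- the parallel copy
  refine ⟨{u | ∀ w, X.Sep w u p → X.Crosses w Fc}, ?_, ?_, tF,
    fun w hs => absurd hs (sep_irrefl w p)⟩
  · -- convexity
    intro a ha b hb z hz w hs
    by_cases hap : X.Sep w a p
    · exact ha w hap
    · have hza : X.Sep w z a := sep_of_sep_not hs (not_sep_symm hap)
      have hab : X.Sep w a b := btw_sub_left hz (sep_symm hza)
      have hbp : X.Sep w b p := sep_of_sep_not (sep_symm hab) hap
      exact hb w hbp
  · -- parallelism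
    intro c
    constructor
    · rintro ⟨u₁, hu₁, u₂, hu₂, hsep⟩
      by_cases h1 : X.Sep c u₁ p
      · exact hu₁ c h1
      · exact hu₂ c (sep_of_sep_not (sep_symm hsep) h1)
    · intro hc
      obtain ⟨k₁, hk₁, k₂, hk₂, hck⟩ := id hc
      have hpick : ∃ k ∈ Fc, X.Sep c k p := by
        by_cases h1 : X.Sep c k₁ p
        · exact ⟨k₁, hk₁, h1⟩
        · exact ⟨k₂, hk₂, sep_of_sep_not (sep_symm hck) h1⟩
      obtain ⟨k, hkF, hkc⟩ := hpick
      set Hc : Set X.V := {z | X.Sep c z p} with hHc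
      have hHcne : Hc.Nonempty := ⟨k, hkc⟩
      set HcSub := ConvexSub.mk' Hc hHcne (convex_halfspace' c p) with hHcSub
      set uc := HcSub.gate p with huc
      have hsfp : X.SepFrom c p Hc := fun z hz => sep_symm hz
      have hsepc : X.Sep c p uc := (HcSub.gate_sep p c).mpr hsfp
      have hucS : uc ∈ {u | ∀ w, X.Sep w u p → X.Crosses w Fc} := by
        intro w' hs'
        by_contra hncr
        have hsf : X.SepFrom w' p Hc := (HcSub.gate_sep p w').mp (sep_symm hs')
        have hsk : X.Sep w' p k := hsf k hkc
        have hSepF : X.SepFrom w' p Fc := by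
          intro k' hk'
          have h7 : ¬ X.Sep w' k k' := fun hcc => hncr ⟨k, hkF, k', hk', hcc⟩
          exact sep_of_sep_not hsk h7
        have hEw' := hKEY w' hSepF
        have hnecw : c ≠ w' := fun he => hncr (he ▸ hc)
        have hcross' : X.Crosses c (X.hset w' (X.side w' p)) :=
          crosses_hset_flip hnecw (hEw' c hc) (X.side w' p)
        set H' := ConvexSub.mk' (X.hset w' (X.side w' p))
          (hset_nonempty w' (X.side w' p)) (hset_convex w' (X.side w' p)) with hH'
        set ks := H'.gate k with hks
        have hksmem : ks ∈ X.hset w' (X.side w' p) := H'.gate_mem k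
        have hnck : ¬ X.Sep c k ks := fun hsx =>
          sep_from_not_crosses ((H'.gate_sep k c).mp hsx) hcross'
        have hksHc : ks ∈ Hc := sep_trans_of_not (not_sep_symm hnck) hkc
        have hwks : X.Sep w' p ks := hsf ks hksHc
        exact hwks hksmem.2.symm
      exact ⟨p, fun w hs => absurd hs (sep_irrefl w p), uc, hucS, hsepc⟩
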